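/- The summatory function of Euler's totient satisfies φ_ℤ(x) = Σ_{k=1}^{⌊x⌋} φ(k) = (3/π²)x² + o(x²) as x → ∞. -/

import Mathlib

open Filter Real

open Finset Topology
open scoped ArithmeticFunction ArithmeticFunction.Moebius

private lemma moebius_tsum' : ∑' d : ℕ, (ArithmeticFunction.moebius d : ℝ) / (d:ℝ)^2 = 6 / π ^ 2 := by
  have h1 : LSeries (fun n => (ArithmeticFunction.zeta n : ℂ)) 2 * LSeries (fun n => (μ n : ℂ)) 2 = 1 :=
    ArithmeticFunction.LSeries_zeta_mul_Lseries_moebius (by norm_num)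
  have h2 : LSeries (fun n => (ArithmeticFunction.zeta n : ℂ)) 2 = riemannZeta 2 :=
    ArithmeticFunction.LSeries_zeta_eq_riemannZeta (by norm_num)
  rw [h2, riemannZeta_two] at h1
  have hpi : ((π : ℂ)) ^ 2 ≠ 0 := by
    simp [Complex.ofReal_ne_zero, Real.pi_ne_zero]
  have h3 : LSeries (fun n => (μ n : ℂ)) 2 = 6 / (π : ℂ) ^ 2 := by
    rw [eq_div_iff hpi]
    field_simp at h1
    linear_combination h1
  have h4 : LSeries (fun n => (μ n : ℂ)) 2
      = ((∑' d : ℕ, (ArithmeticFunction.moebius d : ℝ) / (d:ℝ)^2 : ℝ) : ℂ) := by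
    rw [Complex.ofReal_tsum, LSeries]
    congr 1
    ext n
    rcases eq_or_ne n 0 with rfl | hn
    · simp [LSeries.term_zero]
    · rw [LSeries.term_of_ne_zero hn,
        show (2:ℂ) = ((2:ℕ):ℂ) from by norm_num, Complex.cpow_natCast]
      push_cast
      ring
  rw [h4] at h3
  have h5 : ((∑' d : ℕ, (ArithmeticFunction.moebius d : ℝ) / (d:ℝ)^2 : ℝ) : ℂ)
      = ((6 / π ^ 2 : ℝ) : ℂ) := by
    rw [h3]; push_cast; ring
  exact_mod_cast h5

private lemma totient_eq_sum' (n : ℕ) (hn : 0 < n) :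
    (Nat.totient n : ℝ) = ∑ p ∈ n.divisorsAntidiagonal, (μ p.1 : ℝ) * p.2 := by
  have := (ArithmeticFunction.sum_eq_iff_sum_smul_moebius_eq
    (f := fun k => (Nat.totient k : ℝ)) (g := fun k => (k : ℝ))).mp
    (fun m hm => by exact_mod_cast congrArg (Nat.cast : ℕ → ℝ) (Nat.sum_totient m))
  have h := this n hn
  rw [← h]
  apply Finset.sum_congr rfl
  intro p hp
  rw [zsmul_eq_mul]

private lemma swap_sum' (n : ℕ) (F : ℕ → ℕ → ℝ) :
    ∑ k ∈ Icc 1 n, ∑ p ∈ k.divisorsAntidiagonal, F p.1 p.2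
      = ∑ d ∈ Icc 1 n, ∑ q ∈ Icc 1 (n / d), F d q := by
  rw [← Finset.sum_biUnion]
  · apply Finset.sum_finset_product'
    intro p
    simp only [Finset.mem_biUnion, Finset.mem_Icc, Nat.mem_divisorsAntidiagonal]
    constructor
    · rintro ⟨k, ⟨hk1, hk2⟩, hpk, -⟩
      have h1 : 1 ≤ p.1 := by
        rcases Nat.eq_zero_or_pos p.1 with h | h
        · simp [h] at hpk; omega
        · exact h
      have h2 : 1 ≤ p.2 := by
        rcases Nat.eq_zero_or_pos p.2 with h | h
        · simp [h] at hpk; omega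
        · exact h
      refine ⟨⟨h1, ?_⟩, h2, ?_⟩
      · calc p.1 ≤ p.1 * p.2 := Nat.le_mul_of_pos_right _ h2
          _ = k := hpk
          _ ≤ n := hk2
      · rw [Nat.le_div_iff_mul_le (by omega)]
        rw [mul_comm]; omega
    · rintro ⟨⟨h1, h2⟩, h3, h4⟩
      refine ⟨p.1 * p.2, ⟨?_, ?_⟩, rfl, ?_⟩
      · exact Nat.one_le_iff_ne_zero.mpr (by positivity)
      · rw [Nat.le_div_iff_mul_le (by omega)] at h4
        rw [mul_comm]; omega
      · positivity
  · intro a ha b hb hab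
    apply Finset.disjoint_left.mpr
    intro p hpa hpb
    rw [Nat.mem_divisorsAntidiagonal] at hpa hpb
    exact hab (hpa.1.symm.trans hpb.1)

private lemma gauss' (m : ℕ) : ∑ q ∈ Icc 1 m, (q:ℝ) = m*(m+1)/2 := by
  induction m with
  | zero => simp
  | succ k ih =>
    rw [Finset.sum_Icc_succ_top (by omega), ih]; push_cast; ring

/-- The summatory identity. -/
private lemma S_eq (n : ℕ) :
    ∑ k ∈ Icc 1 n, (Nat.totient k : ℝ)
      = ∑ d ∈ Icc 1 n, (μ d : ℝ) * (((n/d : ℕ):ℝ) * (((n/d : ℕ):ℝ)+1) / 2) := by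
  have h1 : ∑ k ∈ Icc 1 n, (Nat.totient k : ℝ)
      = ∑ k ∈ Icc 1 n, ∑ p ∈ k.divisorsAntidiagonal, (μ p.1 : ℝ) * p.2 := by
    apply Finset.sum_congr rfl
    intro k hk
    rw [Finset.mem_Icc] at hk
    exact totient_eq_sum' k (by omega)
  rw [h1, swap_sum' n (fun d q => (μ d : ℝ) * q)]
  apply Finset.sum_congr rfl
  intro d hd
  rw [← Finset.mul_sum, gauss']

private lemma floor_ratio_tendsto (d : ℕ) (hd : 1 ≤ d) :
    Tendsto (fun n : ℕ => ((n/d : ℕ):ℝ) / n) atTop (𝓝 (1/(d:ℝ))) := by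
  have hd0 : (0:ℝ) < d := by exact_mod_cast hd
  have hdiv : Tendsto (fun n : ℕ => ((n:ℝ)/d)) atTop atTop :=
    tendsto_natCast_atTop_atTop.atTop_div_const hd0
  have h1 : Tendsto (fun n : ℕ => (⌊(n:ℝ)/(d:ℝ)⌋₊:ℝ) / ((n:ℝ)/d)) atTop (𝓝 1) :=
    tendsto_nat_floor_div_atTop.comp hdiv
  have key : Tendsto (fun n : ℕ => ((⌊(n:ℝ)/(d:ℝ)⌋₊:ℝ) / ((n:ℝ)/d)) * (1/d)) atTop
      (𝓝 (1 * (1/d))) := h1.mul_const _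
  rw [one_mul] at key
  apply key.congr'
  filter_upwards [eventually_ge_atTop 1] with n hn
  have hn0 : (0:ℝ) < n := by exact_mod_cast hn
  rw [Nat.floor_div_natCast, Nat.floor_natCast]
  field_simp

private noncomputable def Ff (n d : ℕ) : ℝ :=
  (μ d : ℝ) * (((n/d : ℕ):ℝ) * (((n/d : ℕ):ℝ)+1) / 2) / (n:ℝ)^2

private lemma key_tendsto :
    Tendsto (fun n : ℕ => (∑ k ∈ Icc 1 n, (Nat.totient k : ℝ)) / (n:ℝ)^2) atTop
      (𝓝 (3 / π^2)) := by
  set g : ℕ → ℝ := fun d => (μ d : ℝ) / (2 * (d:ℝ)^2) with hg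
  have hbound_sum : Summable (fun d : ℕ => 1/(d:ℝ)^2) :=
    Real.summable_one_div_nat_pow.mpr one_lt_two
  have hab : ∀ d : ℕ, Tendsto (fun n : ℕ => Ff n d) atTop (𝓝 (g d)) := by
    intro d
    rcases Nat.eq_zero_or_pos d with rfl | hd
    · have : ∀ n : ℕ, Ff n 0 = 0 := by intro n; simp [Ff]
      simp only [this, hg]
      simp
    · have h1 := floor_ratio_tendsto d hd
      have h2 : Tendsto (fun n : ℕ => ((n/d : ℕ):ℝ)/n + 1/(n:ℝ)) atTop (𝓝 (1/(d:ℝ) + 0)) :=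
        h1.add (tendsto_one_div_atTop_nhds_zero_nat)
      have h3 : Tendsto (fun n : ℕ =>
          (μ d : ℝ)/2 * ((((n/d : ℕ):ℝ))/n) * ((((n/d : ℕ):ℝ))/n + 1/(n:ℝ))) atTop
          (𝓝 ((μ d : ℝ)/2 * (1/(d:ℝ)) * (1/(d:ℝ) + 0))) :=
        (Tendsto.mul (tendsto_const_nhds.mul h1) h2)
      have heq : (μ d : ℝ)/2 * (1/(d:ℝ)) * (1/(d:ℝ) + 0) = g d := by
        have hd0 : (d:ℝ) ≠ 0 := by positivity
        field_simp [hg]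
        simp only [hg, mul_zero, add_zero, one_mul]; field_simp
      rw [heq] at h3
      apply h3.congr'
      filter_upwards [eventually_ge_atTop 1] with n hn
      have hn0 : (n:ℝ) ≠ 0 := by
        have : (0:ℝ) < n := by exact_mod_cast hn
        positivity
      simp only [Ff]
      field_simp
  have h_bound : ∀ᶠ n : ℕ in atTop, ∀ d, ‖Ff n d‖ ≤ 1/(d:ℝ)^2 := by
    filter_upwards [eventually_ge_atTop 1] with n hn
    intro d
    rcases Nat.eq_zero_or_pos d with rfl | hd
    · simp [Ff]
    have hn0 : (0:ℝ) < n := by exact_mod_cast hn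
    have hd0 : (0:ℝ) < d := by exact_mod_cast hd
    set m : ℕ := n / d with hm
    have hmu : |(μ d : ℝ)| ≤ 1 := by exact_mod_cast ArithmeticFunction.abs_moebius_le_one (n := d)
    have hmle : (m:ℝ) ≤ (n:ℝ)/d := Nat.cast_div_le
    have hT : (m:ℝ) * ((m:ℝ)+1) / 2 ≤ (n:ℝ)^2/(d:ℝ)^2 := by
      rcases Nat.eq_zero_or_pos m with h0 | h1
      · rw [h0]; simp; positivity
      · have hm1 : (1:ℝ) ≤ m := by exact_mod_cast h1
        have h2 : (m:ℝ) + 1 ≤ 2 * m := by linarith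
        have h3 : (m:ℝ) * ((m:ℝ)+1) ≤ 2 * (m:ℝ)^2 := by nlinarith
        have h4 : ((m:ℝ))^2 ≤ ((n:ℝ)/d)^2 := by
          apply pow_le_pow_left₀ (by positivity) hmle
        rw [div_pow] at h4
        linarith
    have hnorm2 : ‖(n:ℝ)^2‖ = (n:ℝ)^2 := by
      rw [Real.norm_eq_abs, abs_of_pos (by positivity)]
    rw [Ff, norm_div, norm_mul, hnorm2, div_le_iff₀ (by positivity)]
    calc ‖(μ d : ℝ)‖ * ‖(m:ℝ) * ((m:ℝ)+1) / 2‖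
        ≤ 1 * ((m:ℝ) * ((m:ℝ)+1) / 2) := by
          apply mul_le_mul hmu ?_ (norm_nonneg _) zero_le_one
          rw [Real.norm_eq_abs, abs_of_nonneg (by positivity)]
      _ = (m:ℝ) * ((m:ℝ)+1) / 2 := one_mul _
      _ ≤ (n:ℝ)^2/(d:ℝ)^2 := hT
      _ = 1/(d:ℝ)^2 * (n:ℝ)^2 := by ring
  have main : Tendsto (fun n : ℕ => ∑' d : ℕ, Ff n d) atTop (𝓝 (∑' d : ℕ, g d)) :=
    tendsto_tsum_of_dominated_convergence hbound_sum hab h_bound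
  have htsumg : ∑' d : ℕ, g d = 3 / π^2 := by
    have : g = fun d => ((μ d : ℝ) / (d:ℝ)^2) / 2 := by
      funext d
      rcases Nat.eq_zero_or_pos d with rfl | hd
      · simp [hg]
      · have hd0 : (d:ℝ) ≠ 0 := by positivity
        rw [hg]; field_simp
    rw [this, tsum_div_const, moebius_tsum']
    have hpi : π ≠ 0 := Real.pi_ne_zero
    field_simp
    ring
  rw [htsumg] at main
  apply main.congr'
  filter_upwards [eventually_ge_atTop 1] with n hn
  have : ∑' d : ℕ, Ff n d = ∑ d ∈ Icc 1 n, Ff n d := by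
    apply tsum_eq_sum
    intro d hd
    rw [Finset.mem_Icc] at hd
    push_neg at hd
    rcases Nat.eq_zero_or_pos d with rfl | hd1
    · simp [Ff]
    · have : n / d = 0 := Nat.div_eq_of_lt (by omega)
      simp [Ff, this]
  rw [this, S_eq, Finset.sum_div]
  apply Finset.sum_congr rfl
  intro d hd
  rw [Ff]

/-- The summatory function of Euler's totient satisfies
`∑_{k=1}^{⌊x⌋} φ(k) = (3/π²) x² + o(x²)` as `x → ∞`. -/
theorem totient_summatory_asymptotic :
    (fun x : ℝ => (∑ k ∈ Finset.Icc 1 ⌊x⌋₊, (Nat.totient k : ℝ)) - (3 / π ^ 2) * x ^ 2)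
      =o[atTop] fun x : ℝ => x ^ 2 := by
  have hfloor : Tendsto (fun x : ℝ => ⌊x⌋₊) atTop atTop := tendsto_nat_floor_atTop
  have h_a : Tendsto (fun x : ℝ =>
      (∑ k ∈ Finset.Icc 1 ⌊x⌋₊, (Nat.totient k : ℝ)) / ((⌊x⌋₊:ℝ))^2) atTop (𝓝 (3/π^2)) :=
    key_tendsto.comp hfloor
  have h_b : Tendsto (fun x : ℝ => ((⌊x⌋₊:ℝ)/x)^2) atTop (𝓝 1) := by
    have := (tendsto_nat_floor_div_atTop (R := ℝ)).pow 2
    simpa using this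
  have h_c : Tendsto (fun x : ℝ =>
      (∑ k ∈ Finset.Icc 1 ⌊x⌋₊, (Nat.totient k : ℝ)) / x^2) atTop (𝓝 (3/π^2)) := by
    have hmul := h_a.mul h_b
    rw [mul_one] at hmul
    apply hmul.congr'
    filter_upwards [eventually_ge_atTop (1:ℝ)] with x hx
    have hx0 : (0:ℝ) < x := by linarith
    have hf1 : 1 ≤ ⌊x⌋₊ := Nat.one_le_floor_iff x |>.mpr hx
    have hf0 : (0:ℝ) < (⌊x⌋₊:ℝ) := by exact_mod_cast hf1
    field_simp
    try ring
  rw [Asymptotics.isLittleO_iff_tendsto']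
  · have := h_c.sub_const (3/π^2)
    rw [sub_self] at this
    apply this.congr'
    filter_upwards [eventually_ge_atTop (1:ℝ)] with x hx
    have hx0 : x ≠ 0 := by linarith
    field_simp
    try ring
  · filter_upwards [eventually_ge_atTop (1:ℝ)] with x hx h
    exact absurd h (by positivity)
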